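/- Let H be a finite-dimensional real inner product space, V a subspace with V ∩ ker(Λ) = {0}, and Λ : H → ℝ^m linear. Suppose c, d ≥ 0 satisfy c P_{V⊥} + d Λ*Λ ⪰ Id, and set τ = d/(c+d) and Δ_τ = ((1−τ)P_{V⊥} + τΛ*Λ)⁻¹ (τΛ*). Then for all f ∈ H and e ∈ ℝ^m: ‖(Id − Δ_τΛ)f − Δ_τ e‖² ≤ c‖P_{V⊥}f‖² + d‖e‖². -/

import Mathlib

open scoped RealInnerProductSpace

/-- If `c P_{V⊥} + d Λ*Λ ⪰ Id` and `τ = d/(c+d)`, then the regularization map `Δ_τ`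
(characterized by `((1-τ)P_{V⊥} + τΛ*Λ) ∘ Δ_τ = τΛ*`) satisfies the semidefinite
relaxation constraint: `‖(Id - Δ_τΛ)f - Δ_τe‖² ≤ c‖P_{V⊥}f‖² + d‖e‖²`. -/
theorem stmt_15
    {H : Type*} [NormedAddCommGroup H] [InnerProductSpace ℝ H] [FiniteDimensional ℝ H]
    {m : ℕ} (V : Submodule ℝ H) (Λ : H →L[ℝ] EuclideanSpace ℝ (Fin m))
    (hVker : V ⊓ LinearMap.ker (Λ : H →ₗ[ℝ] EuclideanSpace ℝ (Fin m)) = ⊥)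
    (c d : ℝ) (hc : 0 ≤ c) (hd : 0 ≤ d)
    (hPSD : ∀ f : H, ‖f‖ ^ 2 ≤
      ⟪(c • (Vᗮ.subtypeL ∘L Vᗮ.orthogonalProjectionOnto)
        + d • (ContinuousLinearMap.adjoint Λ ∘L Λ)) f, f⟫)
    (τ : ℝ) (hτ : τ = d / (c + d))
    (Δτ : EuclideanSpace ℝ (Fin m) →L[ℝ] H)
    (hΔτ : ∀ y : EuclideanSpace ℝ (Fin m),
      ((1 - τ) • (Vᗮ.subtypeL ∘L Vᗮ.orthogonalProjectionOnto)
        + τ • (ContinuousLinearMap.adjoint Λ ∘L Λ)) (Δτ y)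
        = τ • ContinuousLinearMap.adjoint Λ y) :
    ∀ (f : H) (e : EuclideanSpace ℝ (Fin m)),
      ‖f - Δτ (Λ f) - Δτ e‖ ^ 2
        ≤ c * ‖(Vᗮ.orthogonalProjectionOnto f : H)‖ ^ 2 + d * ‖e‖ ^ 2 := by
  intro f e
  set P : H →L[ℝ] H := Vᗮ.subtypeL ∘L Vᗮ.orthogonalProjectionOnto with hP
  set A : H →L[ℝ] H := ContinuousLinearMap.adjoint Λ ∘L Λ with hA
  have hPg : ∀ x y : H, ⟪P x, y⟫ = ⟪P x, P y⟫ := by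
    intro x y
    have h1 : P x ∈ Vᗮ := (Vᗮ.orthogonalProjectionOnto x).2
    have h2 : y - P y ∈ Vᗮᗮ := Submodule.sub_starProjection_mem_orthogonal (K := Vᗮ) y
    have h3 : ⟪P x, y - P y⟫ = 0 := Submodule.inner_right_of_mem_orthogonal h1 h2
    rw [inner_sub_right] at h3
    linarith
  rcases eq_or_lt_of_le (by positivity : (0:ℝ) ≤ c + d) with hcd | hcd
  · have hc0 : c = 0 := by linarith
    have hd0 : d = 0 := by linarith
    have hH : ∀ x : H, x = 0 := by
      intro x
      have h := hPSD x
      rw [hc0, hd0] at h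
      simp at h
      have : ‖x‖ = 0 := by simp [h]
      simpa using this
    rw [hH (f - Δτ (Λ f) - Δτ e), hc0, hd0]
    simp
  · have hτ1 : (c + d) * τ = d := by rw [hτ]; field_simp
    have hτ2 : (c + d) * (1 - τ) = c := by rw [hτ]; field_simp; ring
    set g := f - Δτ (Λ f) - Δτ e with hg
    have hBg : ((1 - τ) • P + τ • A) g
        = (1 - τ) • (P f) - τ • (ContinuousLinearMap.adjoint Λ e) := by
      rw [hg]
      rw [map_sub, map_sub, hΔτ (Λ f), hΔτ e]
      simp only [ContinuousLinearMap.add_apply, ContinuousLinearMap.smul_apply, hA,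
        ContinuousLinearMap.comp_apply]
      abel
    have key : ⟪(c • P + d • A) g, g⟫ = c * ⟪P f, g⟫ - d * ⟪e, Λ g⟫ := by
      have hop : c • P + d • A = (c + d) • ((1 - τ) • P + τ • A) := by
        rw [smul_add, smul_smul, smul_smul, hτ1, hτ2]
      rw [hop, ContinuousLinearMap.smul_apply, hBg, real_inner_smul_left, inner_sub_left,
        real_inner_smul_left, real_inner_smul_left, ContinuousLinearMap.adjoint_inner_left]
      linear_combination ⟪P f, g⟫ * hτ2 - ⟪e, Λ g⟫ * hτ1
    have hQ : ⟪(c • P + d • A) g, g⟫ = c * ‖P g‖ ^ 2 + d * ‖Λ g‖ ^ 2 := by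
      rw [ContinuousLinearMap.add_apply, inner_add_left, ContinuousLinearMap.smul_apply,
        ContinuousLinearMap.smul_apply, real_inner_smul_left, real_inner_smul_left,
        hPg g g, real_inner_self_eq_norm_sq]
      congr 2
      rw [hA, ContinuousLinearMap.comp_apply, ContinuousLinearMap.adjoint_inner_left,
        real_inner_self_eq_norm_sq]
    have h0 := hPSD g
    have e1 : ⟪P f, g⟫ ≤ ‖P f‖ * ‖P g‖ := by
      rw [hPg f g]; exact real_inner_le_norm _ _
    have e2 : -⟪e, Λ g⟫ ≤ ‖e‖ * ‖Λ g‖ := by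
      have := abs_real_inner_le_norm e (Λ g)
      have := neg_abs_le ⟪e, Λ g⟫
      linarith
    have hPf : (↑(Vᗮ.orthogonalProjectionOnto f) : H) = P f := rfl
    rw [hPf]
    nlinarith [h0, hQ, key, mul_le_mul_of_nonneg_left e1 hc,
      mul_le_mul_of_nonneg_left e2 hd,
      mul_nonneg hc (sq_nonneg (‖P f‖ - ‖P g‖)),
      mul_nonneg hd (sq_nonneg (‖e‖ - ‖Λ g‖))]
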